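/- Let Γ be a locally finite simple graph, F a field and λ ∈ F. Suppose (X_i)_{i ∈ I} is a family of finite subsets of V(Γ) whose union is infinite such that for every i ∈ I there is an eigenfunction of A_{Γ,F} corresponding to λ whose support equals X_i. Then for every vertex v ∈ ⋃_{i ∈ I} X_i there exists an eigenfunction of A_{Γ,F} corresponding to λ whose support is infinite, contains v, and is contained in ⋃_{i ∈ I} X_i. -/
import Mathlib

open Function

/-- The adjacency operator of a locally finite simple graph over a field `F`:
`(adjOp G f) w = ∑_{u ∈ Γ(w)} f u`. -/
def adjOp {V F : Type*} (G : SimpleGraph V) [G.LocallyFinite] [Field F]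
    (f : V → F) (w : V) : F :=
  ∑ u ∈ G.neighborFinset w, f u

/-- An eigenfunction of the adjacency operator corresponding to `l`:
a nonzero `f` with `A f = l • f`. -/
def IsEigenfun {V F : Type*} (G : SimpleGraph V) [G.LocallyFinite] [Field F]
    (l : F) (f : V → F) : Prop :=
  f ≠ 0 ∧ ∀ w, adjOp G f w = l * f w

/-- An `(F, l)`-propagator of `G` with respect to the vertex `v`. -/
def IsPropagator {V F : Type*} [DecidableEq V] (G : SimpleGraph V) [G.LocallyFinite] [Field F]
    (l : F) (v : V) (f : V → F) : Prop :=
  ∀ w, adjOp G f w - l * f w = if w = v then 1 else 0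

lemma adjOp_sum' {V F : Type*} (G : SimpleGraph V) [G.LocallyFinite] [Field F]
    {n : ℕ} (c : Fin n → F) (f : Fin n → V → F) (w : V) :
    adjOp G (fun x => ∑ j, c j * f j x) w = ∑ j, c j * adjOp G (f j) w := by
  simp only [adjOp, Finset.mul_sum]
  exact Finset.sum_comm

lemma adjOp_add {V F : Type*} (G : SimpleGraph V) [G.LocallyFinite] [Field F]
    (f g : V → F) (w : V) :
    adjOp G (f + g) w = adjOp G f w + adjOp G g w := by
  simp [adjOp, Finset.sum_add_distrib]

/-- Accumulating sets: start with `T`, repeatedly add `X (pick current)`. -/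
def accF {V I : Type*} [DecidableEq V] (X : I → Finset V) (pick : Finset V → I)
    (T : Finset V) : ℕ → Finset V
  | 0 => T
  | n+1 => accF X pick T n ∪ X (pick (accF X pick T n))

lemma accF_mono {V I : Type*} [DecidableEq V] (X : I → Finset V) (pick : Finset V → I)
    (T : Finset V) : ∀ {n m : ℕ}, n ≤ m → accF X pick T n ⊆ accF X pick T m := by
  intro n m h
  induction h with
  | refl => exact subset_rfl
  | step h ih => exact ih.trans Finset.subset_union_left

/-- Given finitely supported eigenfunctions whose supports `X i` have infinite union,
for every finite `T` there is an eigenfunction (possibly a combination) vanishing on `T`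
but nonzero somewhere, with finite support inside the union. -/
lemma exists_fresh {V F : Type*} [DecidableEq V] (G : SimpleGraph V) [G.LocallyFinite] [Field F]
    (l : F) {I : Type*} (X : I → Finset V)
    (hinf : (⋃ i, (X i : Set V)).Infinite)
    (hex : ∀ i, ∃ f : V → F, IsEigenfun G l f ∧ support f = (X i : Set V))
    (T : Finset V) :
    ∃ g : V → F, ∃ S : Finset V, (∀ w, adjOp G g w = l * g w) ∧
      support g ⊆ (S : Set V) ∧ (S : Set V) ⊆ ⋃ i, (X i : Set V) ∧
      (∀ t ∈ T, g t = 0) ∧ ∃ w, w ∉ T ∧ g w ≠ 0 := by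
  classical
  -- pick an index whose support escapes a given finite set
  have hpick : ∀ S : Finset V, ∃ i, ∃ w, w ∈ X i ∧ w ∉ S := by
    intro S
    obtain ⟨w, hwU, hwS⟩ := (hinf.diff S.finite_toSet).nonempty
    obtain ⟨i, hi⟩ := Set.mem_iUnion.mp hwU
    exact ⟨i, w, hi, hwS⟩
  choose pick wit hwit1 hwit2 using hpick
  choose ff hffe hffs using hex
  set A : ℕ → Finset V := accF X pick T with hA
  have hA0 : A 0 = T := rfl
  have hAS : ∀ n, X (pick (A n)) ⊆ A (n + 1) := fun n => Finset.subset_union_right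
  have hAmono : ∀ {n m : ℕ}, n ≤ m → A n ⊆ A m := fun h => accF_mono X pick T h
  set m : ℕ := T.card + 1 with hm
  -- the restrictions to T of the m eigenfunctions are linearly dependent
  have hdep : ¬ LinearIndependent F (fun j : Fin m => fun t : (T : Finset V) => ff (pick (A j)) t) := by
    intro h
    have := h.fintype_card_le_finrank
    rw [Module.finrank_pi] at this
    simp [Fintype.card_coe, hm] at this
  obtain ⟨c, hsum, j0, hj0⟩ := Fintype.not_linearIndependent_iff.mp hdep
  refine ⟨fun x => ∑ j : Fin m, c j * ff (pick (A j)) x,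
    Finset.univ.biUnion (fun j : Fin m => X (pick (A j))), ?_, ?_, ?_, ?_, ?_⟩
  · -- eigen-equation
    intro w
    rw [adjOp_sum', Finset.mul_sum]
    refine Finset.sum_congr rfl fun j _ => ?_
    rw [(hffe (pick (A j))).2 w]
    ring
  · -- support inside the finite union
    intro x hx
    simp only [mem_support] at hx
    by_contra hxS
    apply hx
    refine Finset.sum_eq_zero fun j _ => ?_
    have : ff (pick (A j)) x = 0 := by
      by_contra h0
      have : x ∈ support (ff (pick (A j))) := h0
      rw [hffs] at this
      exact hxS (by
        simp only [Finset.coe_biUnion, Finset.coe_univ, Set.mem_iUnion]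
        exact ⟨j, Set.mem_univ j, this⟩)
    rw [this, mul_zero]
  · -- finite union inside the full union
    intro x hx
    simp only [Finset.coe_biUnion, Finset.coe_univ, Set.mem_iUnion] at hx
    obtain ⟨j, _, hj⟩ := hx
    exact Set.mem_iUnion.mpr ⟨pick (A j), hj⟩
  · -- vanishes on T
    intro t ht
    have := congrFun hsum ⟨t, ht⟩
    simpa using this
  · -- nonzero somewhere outside T
    set J : Finset (Fin m) := Finset.univ.filter (fun j => c j ≠ 0) with hJ
    have hJne : J.Nonempty := ⟨j0, by simp [hJ, hj0]⟩
    set jm : Fin m := J.max' hJne with hjm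
    have hjmJ : jm ∈ J := J.max'_mem hJne
    have hcjm : c jm ≠ 0 := by simpa [hJ] using hjmJ
    set w : V := wit (A jm) with hw
    have hwX : w ∈ X (pick (A jm)) := hwit1 _
    have hwA : w ∉ A jm := hwit2 _
    refine ⟨w, fun hwT => hwA (hAmono (Nat.zero_le _) (hA0 ▸ hwT)), ?_⟩
    have hterm : ∀ j : Fin m, j ≠ jm → c j * ff (pick (A j)) w = 0 := by
      intro j hj
      by_cases hc : c j = 0
      · rw [hc, zero_mul]
      · have hjJ : j ∈ J := by simp [hJ, hc]
        have hjle : j ≤ jm := J.le_max' j hjJ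
        have hjlt : (j : ℕ) < (jm : ℕ) := lt_of_le_of_ne (by exact_mod_cast hjle)
          (fun h => hj (Fin.ext h))
        have hsub : X (pick (A j)) ⊆ A jm := (hAS j).trans (hAmono hjlt)
        have : ff (pick (A j)) w = 0 := by
          by_contra h0
          have : w ∈ support (ff (pick (A j))) := h0
          rw [hffs] at this
          exact hwA (hsub this)
        rw [this, mul_zero]
    show (∑ j : Fin m, c j * ff (pick (A j)) w) ≠ 0
    rw [Finset.sum_eq_single jm (fun j _ hj => hterm j hj) (by simp)]
    have : ff (pick (A jm)) w ≠ 0 := by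
      have : w ∈ support (ff (pick (A jm))) := by rw [hffs]; exact hwX
      exact this
    exact mul_ne_zero hcjm this

/-- Iteration: add a fresh eigenfunction at each step, tracking a finite superset of support. -/
def seqF {V F : Type*} [Field F] [DecidableEq V]
    (next : Finset V → (V → F) × Finset V) (p0 : (V → F) × Finset V) :
    ℕ → (V → F) × Finset V
  | 0 => p0
  | n+1 => ⟨(seqF next p0 n).1 + (next (seqF next p0 n).2).1,
            (seqF next p0 n).2 ∪ (next (seqF next p0 n).2).2⟩

theorem stmt18 {V F : Type*} (G : SimpleGraph V) [G.LocallyFinite] [Field F]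
    (l : F) {I : Type*} (X : I → Finset V)
    (hinf : (⋃ i, (X i : Set V)).Infinite)
    (hex : ∀ i, ∃ f : V → F, IsEigenfun G l f ∧ support f = (X i : Set V)) :
    ∀ v ∈ ⋃ i, (X i : Set V), ∃ f : V → F, IsEigenfun G l f ∧
      (support f).Infinite ∧ v ∈ support f ∧ support f ⊆ ⋃ i, (X i : Set V) := by
  classical
  intro v hv
  set U : Set V := ⋃ i, (X i : Set V) with hU
  have hfresh := fun T => exists_fresh G l X hinf hex T
  choose gg SS heig hgsupp hsubU hvan wwit hwT hwne using hfresh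
  obtain ⟨i0, hvi0⟩ := Set.mem_iUnion.mp hv
  obtain ⟨f0, hf0e, hf0s⟩ := hex i0
  set next : Finset V → (V → F) × Finset V := fun T => (gg T, SS T) with hnext
  set p : ℕ → (V → F) × Finset V := seqF next (f0, X i0) with hp
  set fs : ℕ → V → F := fun n => (p n).1 with hfs
  set Ss : ℕ → Finset V := fun n => (p n).2 with hSs
  have hfs0 : fs 0 = f0 := rfl
  have hSs0 : Ss 0 = X i0 := rfl
  have hfsS : ∀ n, fs (n+1) = fs n + gg (Ss n) := fun n => rfl
  have hSsS : ∀ n, Ss (n+1) = Ss n ∪ SS (Ss n) := fun n => rfl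
  -- eigen-equation for each fs n
  have heign : ∀ n w, adjOp G (fs n) w = l * fs n w := by
    intro n
    induction n with
    | zero => exact hf0e.2
    | succ n ih =>
      intro w
      rw [hfsS, adjOp_add, ih w, heig (Ss n) w, Pi.add_apply, mul_add]
  -- support inside Ss n
  have hsupp : ∀ n, support (fs n) ⊆ (Ss n : Set V) := by
    intro n
    induction n with
    | zero => rw [hfs0, hf0s, hSs0]
    | succ n ih =>
      rw [hfsS, hSsS]
      refine (support_add _ _).trans ?_
      rw [Finset.coe_union]
      exact Set.union_subset_union ih (hgsupp (Ss n))
  -- Ss n inside U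
  have hSU : ∀ n, (Ss n : Set V) ⊆ U := by
    intro n
    induction n with
    | zero => rw [hSs0]; exact Set.subset_iUnion (fun i => (X i : Set V)) i0
    | succ n ih =>
      rw [hSsS, Finset.coe_union]
      exact Set.union_subset ih (hsubU (Ss n))
  -- monotonicity
  have hSmono : ∀ {n m : ℕ}, n ≤ m → Ss n ⊆ Ss m := by
    intro n m h
    induction h with
    | refl => exact subset_rfl
    | step h ih => exact ih.trans (by rw [hSsS]; exact Finset.subset_union_left)
  -- agreement
  have hagree : ∀ n m, n ≤ m → ∀ x ∈ Ss n, fs m x = fs n x := by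
    intro n m h
    induction h with
    | refl => intro x _; rfl
    | @step m h ih =>
      intro x hx
      rw [hfsS, Pi.add_apply, hvan (Ss m) x (hSmono h hx), add_zero]
      exact ih x hx
  -- the limit function
  set k : V → ℕ := fun x => if h : ∃ n, x ∈ Ss n then Nat.find h else 0 with hk
  set f : V → F := fun x => fs (k x) x with hf
  have hfeq : ∀ x n, x ∈ Ss n → f x = fs n x := by
    intro x n hx
    have hex' : ∃ n, x ∈ Ss n := ⟨n, hx⟩
    have hkx : k x = Nat.find hex' := by simp [hk, hex']
    have h1 : x ∈ Ss (k x) := hkx ▸ Nat.find_spec hex'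
    have h2 : k x ≤ n := hkx ▸ Nat.find_le hx
    exact (hagree (k x) n h2 x h1).symm
  have hfzero : ∀ x, (∀ n, x ∉ Ss n) → f x = 0 ∧ ∀ n, fs n x = 0 := by
    intro x hx
    have hall : ∀ n, fs n x = 0 := by
      intro n
      by_contra h0
      exact hx n (hsupp n h0)
    exact ⟨hall (k x), hall⟩
  -- eigen-equation for f
  have hfe : ∀ w, adjOp G f w = l * f w := by
    intro w
    set N : Finset V := insert w (G.neighborFinset w) with hN
    set M : ℕ := N.sup k with hM
    have hagreeN : ∀ u ∈ N, f u = fs M u := by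
      intro u hu
      by_cases hcase : ∃ n, u ∈ Ss n
      · have hku : k u = Nat.find hcase := by simp [hk, hcase]
        have h1 : u ∈ Ss (k u) := hku ▸ Nat.find_spec hcase
        have h2 : k u ≤ M := Finset.le_sup hu
        rw [hfeq u (k u) h1]
        exact (hagree (k u) M h2 u h1).symm
      · push_neg at hcase
        obtain ⟨h1, h2⟩ := hfzero u hcase
        rw [h1, h2 M]
    have hw : f w = fs M w := hagreeN w (Finset.mem_insert_self _ _)
    have : adjOp G f w = adjOp G (fs M) w := by
      refine Finset.sum_congr rfl fun u hu => ?_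
      exact hagreeN u (Finset.mem_insert_of_mem hu)
    rw [this, heign M w, hw]
  -- v in the support
  have hvS : v ∈ Ss 0 := by rw [hSs0]; exact hvi0
  have hfv : f v ≠ 0 := by
    rw [hfeq v 0 hvS, hfs0]
    have : v ∈ support f0 := by rw [hf0s]; exact hvi0
    exact this
  -- support in U
  have hfU : support f ⊆ U := by
    intro x hx
    by_cases hcase : ∃ n, x ∈ Ss n
    · obtain ⟨n, hn⟩ := hcase
      exact hSU n hn
    · push_neg at hcase
      exact absurd (hfzero x hcase).1 hx
  -- infinite support via the witnesses
  set wn : ℕ → V := fun n => wwit (Ss n) with hwn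
  have hwnS : ∀ n, wn n ∈ Ss (n+1) ∧ f (wn n) ≠ 0 := by
    intro n
    have hnotin : wn n ∉ Ss n := hwT (Ss n)
    have hfn0 : fs n (wn n) = 0 := by
      by_contra h0
      exact hnotin (hsupp n h0)
    have hne : fs (n+1) (wn n) ≠ 0 := by
      rw [hfsS, Pi.add_apply, hfn0, zero_add]
      exact hwne (Ss n)
    have hmem : wn n ∈ Ss (n+1) := hsupp (n+1) hne
    exact ⟨hmem, by rw [hfeq (wn n) (n+1) hmem]; exact hne⟩
  have hwninj : Function.Injective wn := by
    intro a b hab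
    by_contra hne
    rcases Nat.lt_or_ge a b with h | h
    · have h1 : wn a ∈ Ss b := hSmono h (hwnS a).1
      rw [hab] at h1
      exact hwT (Ss b) h1
    · have h' : b < a := lt_of_le_of_ne h (Ne.symm hne)
      have h1 : wn b ∈ Ss a := hSmono h' (hwnS b).1
      rw [← hab] at h1
      exact hwT (Ss a) h1
  have hinf' : (support f).Infinite :=
    Set.infinite_of_injective_forall_mem hwninj (fun n => (hwnS n).2)
  exact ⟨f, ⟨fun h0 => hfv (congrFun h0 v), hfe⟩, hinf', hfv, hfU⟩
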